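/- Let α, β, γ be complex numbers with (α+1)/2, (β+1)/2, γ+1 not non-positive integers. Define S(α,β,γ) = ∑_{n=0}^∞ (1/2)_n (γ+1)_n / (((α+1)/2)_{n+1} ((β+1)/2)_{n+1}), assumed to converge (e.g. when Re(2γ−α−β) < 1). Then α(α−2γ−1)·S(α,β,γ)/4 − (α−1)(α+β−2γ−1)·S(α−2,β,γ)/4 + 1 = 0, provided also (α−1)/2 is not a non-positive integer and both series converge. -/

import Mathlib

/-- Pochhammer symbol (rising factorial) `(a)_n = a(a+1)⋯(a+n-1)`. -/
noncomputable def poch (a : ℂ) (n : ℕ) : ℂ := (ascPochhammer ℂ n).eval a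

/-- The series `S(α,β,γ) = ∑_{n=0}^∞ (1/2)_n (γ+1)_n / ((α+1)/2)_{n+1} ((β+1)/2)_{n+1}`. -/
noncomputable def S (α β γ : ℂ) : ℂ :=
  ∑' n : ℕ, poch (1 / 2) n * poch (γ + 1) n /
    (poch ((α + 1) / 2) (n + 1) * poch ((β + 1) / 2) (n + 1))

lemma poch_zero (a : ℂ) : poch a 0 = 1 := by simp [poch]

lemma poch_succ (a : ℂ) (n : ℕ) : poch a (n + 1) = poch a n * (a + n) := by
  simp [poch, ascPochhammer_succ_eval]

lemma poch_succ_left (a : ℂ) (n : ℕ) : poch a (n + 1) = a * poch (a + 1) n := by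
  simp [poch, ascPochhammer_succ_left, Polynomial.eval_comp, Polynomial.eval_mul]

lemma poch_ne_zero {a : ℂ} (h : ∀ k : ℕ, a ≠ -(k : ℂ)) : ∀ n, poch a n ≠ 0 := by
  intro n
  induction n with
  | zero => simp [poch_zero]
  | succ m ih =>
    rw [poch_succ]
    refine mul_ne_zero ih ?_
    intro hz
    exact h m (by linear_combination hz)

lemma not_summable_aux (B C : ℝ) (hB : 0 < B) (hC : 0 < C) :
    ¬ Summable (fun n : ℕ => C / (B + n)) := by
  intro hs
  have key : Summable (fun n : ℕ => 1 / ((n : ℝ) + 1)) := by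
    have h1 : Summable (fun n : ℕ => (C / (B + 1)) * (1 / ((n : ℝ) + 1))) := by
      refine Summable.of_nonneg_of_le (fun n => ?_) (fun n => ?_) hs
      · positivity
      · rw [div_mul_div_comm, mul_one]
        apply div_le_div_of_nonneg_left hC.le (by positivity)
        nlinarith [Nat.cast_nonneg (α := ℝ) n]
    have h2 := h1.mul_left ((C / (B + 1))⁻¹)
    have hne : (C / (B + 1)) ≠ 0 := by positivity
    have h3 : (fun i : ℕ => (C / (B + 1))⁻¹ * (C / (B + 1) * (1 / ((i:ℝ) + 1)))) =
        fun i : ℕ => 1 / ((i:ℝ) + 1) := by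
      funext i; rw [inv_mul_cancel_left₀ hne]
    rwa [h3] at h2
  have : Summable (fun n : ℕ => 1 / (n : ℝ)) := by
    rw [← summable_nat_add_iff 1]
    simpa using key
  exact Real.not_summable_one_div_natCast this

set_option maxHeartbeats 1000000 in
theorem stmt5 (α β γ : ℂ)
    (hα : ∀ k : ℕ, (α + 1) / 2 ≠ -(k : ℂ))
    (hα' : ∀ k : ℕ, (α - 1) / 2 ≠ -(k : ℂ))
    (hβ : ∀ k : ℕ, (β + 1) / 2 ≠ -(k : ℂ))
    (hγ : ∀ k : ℕ, γ + 1 ≠ -(k : ℂ))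
    (hS1 : Summable fun n : ℕ => poch (1 / 2) n * poch (γ + 1) n /
      (poch ((α + 1) / 2) (n + 1) * poch ((β + 1) / 2) (n + 1)))
    (hS2 : Summable fun n : ℕ => poch (1 / 2) n * poch (γ + 1) n /
      (poch ((α - 2 + 1) / 2) (n + 1) * poch ((β + 1) / 2) (n + 1))) :
    α * (α - 2 * γ - 1) * (S α β γ / 4) -
      (α - 1) * (α + β - 2 * γ - 1) * (S (α - 2) β γ / 4) + 1 = 0 := by
  have hshift : (α - 2 + 1) / 2 = (α - 1) / 2 := by ring
  rw [hshift] at hS2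
  -- abbreviations
  set t : ℕ → ℂ := fun n => poch (1 / 2) n * poch (γ + 1) n /
      (poch ((α + 1) / 2) (n + 1) * poch ((β + 1) / 2) (n + 1)) with ht
  set u : ℕ → ℂ := fun n => poch (1 / 2) n * poch (γ + 1) n /
      (poch ((α - 1) / 2) (n + 1) * poch ((β + 1) / 2) (n + 1)) with hu
  set w : ℕ → ℂ := fun n => poch (1 / 2) n * poch (γ + 1) n /
      (poch ((α + 1) / 2) n * poch ((β + 1) / 2) n) with hw
  have hAne := poch_ne_zero hα
  have hBne := poch_ne_zero hβ
  have ha'0 : (α - 1) / 2 ≠ 0 := by simpa using hα' 0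
  have haan : ∀ n : ℕ, (α + 1) / 2 + n ≠ 0 := by
    intro n hz; exact hα n (by linear_combination hz)
  have hbbn : ∀ n : ℕ, (β + 1) / 2 + n ≠ 0 := by
    intro n hz; exact hβ n (by linear_combination hz)
  have ha'succ : ∀ n : ℕ, poch ((α - 1) / 2) (n + 1) = (α - 1) / 2 * poch ((α + 1) / 2) n := by
    intro n
    rw [poch_succ_left]
    congr 2
    ring
  -- key telescoping identity
  have hkey : ∀ n : ℕ, α * (α - 2 * γ - 1) / 4 * t n -
      (α - 1) * (α + β - 2 * γ - 1) / 4 * u n = w (n + 1) - w n := by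
    intro n
    rw [ht, hu, hw]
    simp only
    rw [ha'succ n, poch_succ ((α + 1) / 2) n, poch_succ ((β + 1) / 2) n,
      poch_succ (1 / 2) n, poch_succ (γ + 1) n]
    have hA := hAne n
    have hB := hBne n
    have han := haan n
    have hbn := hbbn n
    generalize poch (1 / 2) n = P
    generalize poch (γ + 1) n = Q
    generalize hgA : poch ((α + 1) / 2) n = A at hA ⊢
    generalize hgB : poch ((β + 1) / 2) n = B at hB ⊢
    have hz0 := ha'0
    generalize hxdef : (α + 1) / 2 + (n : ℂ) = x at han ⊢
    generalize hydef : (β + 1) / 2 + (n : ℂ) = y at hbn ⊢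
    generalize hzdef : (α - 1) / 2 = z at hz0 ⊢
    field_simp
    rw [← hxdef, ← hydef, ← hzdef]
    ring
  -- summability of the combination
  have hE : Summable (fun n => α * (α - 2 * γ - 1) / 4 * t n -
      (α - 1) * (α + β - 2 * γ - 1) / 4 * u n) :=
    (hS1.mul_left _).sub (hS2.mul_left _)
  -- w n = ((α-1)/2) * ((β+1)/2 + n) * u n
  have hwu : ∀ n : ℕ, w n = (α - 1) / 2 * ((β + 1) / 2 + n) * u n := by
    intro n
    rw [hw, hu]
    simp only
    rw [ha'succ n, poch_succ ((β + 1) / 2) n]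
    have hA := hAne n
    have hB := hBne n
    have hbn := hbbn n
    generalize poch (1 / 2) n = P
    generalize poch (γ + 1) n = Q
    generalize hgA : poch ((α + 1) / 2) n = A at hA ⊢
    generalize hgB : poch ((β + 1) / 2) n = B at hB ⊢
    have hz0 := ha'0
    generalize hydef : (β + 1) / 2 + (n : ℂ) = y at hbn ⊢
    generalize hzdef : (α - 1) / 2 = z at hz0 ⊢
    field_simp
    try rw [div_eq_div_iff (by simp [hA, hB, hbn, hz0]) (by simp [hA, hB, hbn, hz0])]
  -- the partial sums telescope, so w converges
  set L : ℂ := (∑' n, (α * (α - 2 * γ - 1) / 4 * t n -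
      (α - 1) * (α + β - 2 * γ - 1) / 4 * u n)) + 1 with hL
  have hw0 : w 0 = 1 := by simp [hw, poch_zero]
  have htendw : Filter.Tendsto w Filter.atTop (nhds L) := by
    have h1 := hE.hasSum.tendsto_sum_nat
    have h2 : ∀ N : ℕ, ∑ i ∈ Finset.range N, (α * (α - 2 * γ - 1) / 4 * t i -
        (α - 1) * (α + β - 2 * γ - 1) / 4 * u i) = w N - 1 := by
      intro N
      rw [Finset.sum_congr rfl (fun i _ => hkey i), Finset.sum_range_sub, hw0]
    simp only [h2] at h1
    have := h1.add_const 1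
    simpa using this
  -- limit must be zero
  have hL0 : L = 0 := by
    by_contra hLne
    have hnorm : Filter.Tendsto (fun n => ‖w n‖) Filter.atTop (nhds ‖L‖) := htendw.norm
    have hev : ∀ᶠ n : ℕ in Filter.atTop, ‖L‖ / 2 ≤ ‖w n‖ := by
      have : Set.Ici (‖L‖ / 2) ∈ nhds ‖L‖ := by
        apply Ici_mem_nhds
        have : 0 < ‖L‖ := norm_pos_iff.mpr hLne
        linarith
      exact hnorm.eventually_mem this
    have hun : Summable (fun n => ‖u n‖) := summable_norm_iff.mpr hS2
    -- lower bound for ‖u n‖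
    have hub : ∀ᶠ n : ℕ in Filter.atTop,
        (‖L‖ / 2) / (‖(α - 1) / 2‖ * (‖(β + 1) / 2‖ + n)) ≤ ‖u n‖ := by
      filter_upwards [hev] with n hn
      have hwn : ‖w n‖ ≤ ‖(α - 1) / 2‖ * (‖(β + 1) / 2‖ + n) * ‖u n‖ := by
        rw [hwu n, norm_mul, norm_mul]
        gcongr
        calc ‖(β + 1) / 2 + (n : ℂ)‖ ≤ ‖(β + 1) / 2‖ + ‖(n : ℂ)‖ := norm_add_le _ _
        _ = ‖(β + 1) / 2‖ + n := by rw [Complex.norm_natCast]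
      have hden : 0 < ‖(α - 1) / 2‖ * (‖(β + 1) / 2‖ + n) := by
        have h1 : 0 < ‖(α - 1) / 2‖ := norm_pos_iff.mpr ha'0
        have h2 : 0 < ‖(β + 1) / 2‖ := norm_pos_iff.mpr (by simpa using hβ 0)
        have : (0:ℝ) ≤ n := Nat.cast_nonneg n
        nlinarith
      rw [div_le_iff₀ hden]
      calc ‖L‖ / 2 ≤ ‖w n‖ := hn
      _ ≤ _ := hwn
      _ = ‖u n‖ * (‖(α - 1) / 2‖ * (‖(β + 1) / 2‖ + n)) := by ring
    -- so the harmonic-type series is summable: contradiction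
    have hsum : Summable (fun n : ℕ =>
        (‖L‖ / 2 / ‖(α - 1) / 2‖) / (‖(β + 1) / 2‖ + n)) := by
      apply Summable.of_norm_bounded_eventually_nat hun
      filter_upwards [hub] with n hn
      rw [Real.norm_eq_abs, abs_of_nonneg (by positivity)]
      calc ‖L‖ / 2 / ‖(α - 1) / 2‖ / (‖(β + 1) / 2‖ + n)
          = ‖L‖ / 2 / (‖(α - 1) / 2‖ * (‖(β + 1) / 2‖ + n)) := by
            rw [div_div]
      _ ≤ ‖u n‖ := hn
    refine not_summable_aux (‖(β + 1) / 2‖) (‖L‖ / 2 / ‖(α - 1) / 2‖) ?_ ?_ hsum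
    · exact norm_pos_iff.mpr (by simpa using hβ 0)
    · have h1 : 0 < ‖L‖ := norm_pos_iff.mpr hLne
      have h2 : 0 < ‖(α - 1) / 2‖ := norm_pos_iff.mpr ha'0
      positivity
  -- conclude
  have htsum : (∑' n, (α * (α - 2 * γ - 1) / 4 * t n -
      (α - 1) * (α + β - 2 * γ - 1) / 4 * u n)) = -1 := by
    have := hL
    rw [hL0] at this
    linear_combination -this
  rw [Summable.tsum_sub (hS1.mul_left _) (hS2.mul_left _), tsum_mul_left, tsum_mul_left] at htsum
  have hS1eq : S α β γ = ∑' n, t n := by rw [S, ht]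
  have hS2eq : S (α - 2) β γ = ∑' n, u n := by rw [S, hu, hshift]
  rw [hS1eq, hS2eq]
  linear_combination htsum
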